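/- Let V be a finite-dimensional real vector space and L ⊆ 𝕋_ℂV a lagrangian subspace of type 0, i.e. E := pr_{V_ℂ}(L) satisfies E = Ē. Set Δ := E ∩ V, so E = Δ_ℂ. Let ε ∈ Λ²E* be the unique form with L = L(E,ε), and write B₀ := Re(ε|_{Δ×Δ}) and ω := Im(ε|_{Δ×Δ}), both in Λ²Δ*. Then for every real B ∈ Λ²V* with B|_{Δ×Δ} = B₀ (such an extension exists), one has L = e^B(L(Δ_ℂ, i·ω̃)), where ω̃ is the ℂ-bilinear extension of ω to Δ_ℂ and L(Δ_ℂ, i·ω̃) := {X + ξ ∈ 𝕋_ℂV : X ∈ Δ_ℂ, ξ(Y) = i·ω̃(X,Y) for all Y ∈ Δ_ℂ}. -/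

import Mathlib

open TensorProduct Module

noncomputable section

namespace CDirac


/-- The real generalized tangent space `V ⊕ V*`. -/
abbrev TR (V : Type*) [AddCommGroup V] [Module ℝ V] := V × (V →ₗ[ℝ] ℝ)

variable {V : Type*} [AddCommGroup V] [Module ℝ V]

/-- The canonical pairing `⟨X+ξ, Y+η⟩ = (η X + ξ Y)/2` on `𝕋V`. -/
def pairR (a b : TR V) : ℝ := (b.2 a.1 + a.2 b.1) / 2

lemma pairR_add_left (a a' b : TR V) : pairR (a + a') b = pairR a b + pairR a' b := by
  simp only [pairR, Prod.fst_add, Prod.snd_add, map_add, LinearMap.add_apply]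
  ring

lemma pairR_smul_left (c : ℝ) (a b : TR V) : pairR (c • a) b = c * pairR a b := by
  simp only [pairR, Prod.smul_fst, Prod.smul_snd, map_smul, LinearMap.smul_apply,
    smul_eq_mul]
  ring

/-- Orthogonal complement with respect to the pairing on `𝕋V`. -/
def orthR (L : Submodule ℝ (TR V)) : Submodule ℝ (TR V) where
  carrier := {a | ∀ b ∈ L, pairR a b = 0}
  zero_mem' := fun b _ => by simp [pairR]
  add_mem' := fun {a a'} ha ha' b hb => by
    rw [pairR_add_left, ha b hb, ha' b hb, add_zero]
  smul_mem' := fun c a ha b hb => by rw [pairR_smul_left, ha b hb, mul_zero]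

/-- A real lagrangian subspace: `L = L^⊥`. -/
def IsLagrangianR (L : Submodule ℝ (TR V)) : Prop := L = orthR L

/-- An isotropic subspace of `𝕋V`. -/
def IsIsotropicR (K : Submodule ℝ (TR V)) : Prop := ∀ a ∈ K, ∀ b ∈ K, pairR a b = 0

/-- The quotient `K^⊥/K`. -/
abbrev quotK (K : Submodule ℝ (TR V)) :=
  @HasQuotient.Quotient _ _
    (@Submodule.hasQuotient ℝ ↥(orthR K) _ (orthR K).addCommGroup (orthR K).module)
    (K.comap (orthR K).subtype)

/-- The quotient map `K^⊥ → K^⊥/K`. -/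
def mkK (K : Submodule ℝ (TR V)) : ↥(orthR K) →ₗ[ℝ] quotK K :=
  @Submodule.mkQ ℝ _ _ (orthR K).addCommGroup (orthR K).module (K.comap (orthR K).subtype)




/-- The complexification `V_ℂ = ℂ ⊗_ℝ V`. -/
abbrev Cx (V : Type*) [AddCommGroup V] [Module ℝ V] := ℂ ⊗[ℝ] V

/-- The complex dual `(V_ℂ)^*`. -/
abbrev DualC (V : Type*) [AddCommGroup V] [Module ℝ V] := Cx V →ₗ[ℂ] ℂ

/-- The complexified generalized tangent space `𝕋_ℂ V = V_ℂ ⊕ (V_ℂ)^*`. -/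
abbrev TCx (V : Type*) [AddCommGroup V] [Module ℝ V] := Cx V × DualC V

/-- The ℂ-bilinear pairing on `𝕋_ℂ V`. -/
def pairC (a b : TCx V) : ℂ := (b.2 a.1 + a.2 b.1) / 2

lemma pairC_add_left (a a' b : TCx V) : pairC (a + a') b = pairC a b + pairC a' b := by
  simp only [pairC, Prod.fst_add, Prod.snd_add, map_add, LinearMap.add_apply]
  ring

lemma pairC_smul_left (c : ℂ) (a b : TCx V) : pairC (c • a) b = c * pairC a b := by
  simp only [pairC, Prod.smul_fst, Prod.smul_snd, map_smul, LinearMap.smul_apply,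
    smul_eq_mul]
  ring

/-- Orthogonal complement with respect to the ℂ-bilinear pairing on `𝕋_ℂ V`. -/
def orthC (L : Submodule ℂ (TCx V)) : Submodule ℂ (TCx V) where
  carrier := {a | ∀ b ∈ L, pairC a b = 0}
  zero_mem' := fun b _ => by simp [pairC]
  add_mem' := fun {a a'} ha ha' b hb => by
    rw [pairC_add_left, ha b hb, ha' b hb, add_zero]
  smul_mem' := fun c a ha b hb => by rw [pairC_smul_left, ha b hb, mul_zero]

/-- A complex lagrangian subspace: `L = L^⊥`. -/
def IsLagrangianC (L : Submodule ℂ (TCx V)) : Prop := L = orthC L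

private lemma conjCxAux_smul (z : ℂ) (x : Cx V) :
    TensorProduct.map Complex.conjAe.toLinearMap LinearMap.id (z • x) =
      starRingEnd ℂ z • TensorProduct.map Complex.conjAe.toLinearMap LinearMap.id x := by
  induction x using TensorProduct.induction_on with
  | zero => simp
  | tmul w v => simp [smul_tmul', smul_eq_mul, Complex.conjAe_coe, map_mul]
  | add x y hx hy => simp only [smul_add, map_add, hx, hy]

/-- Conjugation on `V_ℂ`, as a `conj`-semilinear map. -/
def conjCx : Cx V →ₛₗ[starRingEnd ℂ] Cx V where
  toFun := TensorProduct.map Complex.conjAe.toLinearMap LinearMap.id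
  map_add' := map_add _
  map_smul' := conjCxAux_smul

lemma conjCx_smul (z : ℂ) (x : Cx V) :
    conjCx (z • x) = starRingEnd ℂ z • conjCx x := conjCxAux_smul z x

/-- Conjugation of a complex linear functional. -/
def conjDualFun (ξ : DualC V) : DualC V where
  toFun x := starRingEnd ℂ (ξ (conjCx x))
  map_add' x y := by simp
  map_smul' z x := by
    try dsimp only
    rw [conjCx_smul, map_smul, smul_eq_mul, map_mul, RingHom.id_apply]
    simp [smul_eq_mul]

/-- Conjugation on `(V_ℂ)^*`, as a `conj`-semilinear map. -/
def conjDual : DualC V →ₛₗ[starRingEnd ℂ] DualC V where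
  toFun := conjDualFun
  map_add' ξ η := by ext x; simp [conjDualFun]
  map_smul' z ξ := by
    ext x
    simp [conjDualFun, smul_eq_mul, map_mul]

/-- Conjugation on `𝕋_ℂ V`, as a `conj`-semilinear map. -/
def conjT : TCx V →ₛₗ[starRingEnd ℂ] TCx V where
  toFun a := (conjCx a.1, conjDual a.2)
  map_add' a b := by simp [Prod.ext_iff]
  map_smul' z a := by
    simp [Prod.ext_iff, Prod.smul_fst, Prod.smul_snd, map_smulₛₗ]

instance : RingHomSurjective (starRingEnd ℂ) :=
  ⟨fun z => ⟨starRingEnd ℂ z, by simp⟩⟩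

/-- The conjugate `L̄` of a ℂ-subspace of `𝕋_ℂ V`. -/
def conjSub (L : Submodule ℂ (TCx V)) : Submodule ℂ (TCx V) := L.map conjT

/-- The conjugate `Ē` of a ℂ-subspace of `V_ℂ`. -/
def conjE (E : Submodule ℂ (Cx V)) : Submodule ℂ (Cx V) := E.map conjCx

/-- The canonical inclusion `V → V_ℂ`, `v ↦ 1 ⊗ v`. -/
def iV : V →ₗ[ℝ] Cx V := TensorProduct.mk ℝ ℂ V 1





/-- ℝ-linear auxiliary version of the ℂ-linear extension of a real functional. -/
def dualExtAux (α : V →ₗ[ℝ] ℝ) : Cx V →ₗ[ℝ] ℂ :=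
  TensorProduct.lift
    (LinearMap.mk₂ ℝ (fun z v => z * (α v : ℂ))
      (fun z w v => by push_cast; ring)
      (fun r z v => by simp only [Complex.real_smul]; ring)
      (fun z v w => by push_cast [map_add]; ring)
      (fun r z v => by simp only [map_smul, smul_eq_mul, Complex.real_smul]; push_cast; ring))

private lemma dualExtAux_smulC (α : V →ₗ[ℝ] ℝ) (z : ℂ) (x : Cx V) :
    dualExtAux α (z • x) = z * dualExtAux α x := by
  induction x using TensorProduct.induction_on with
  | zero => simp
  | tmul w v =>
      simp only [dualExtAux, smul_tmul', lift.tmul, LinearMap.mk₂_apply, smul_eq_mul]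
      ring
  | add x y hx hy => simp only [smul_add, map_add, hx, hy]; ring

/-- The ℂ-linear extension of a real functional `α : V → ℝ` to `V_ℂ`. -/
def dualExtFun (α : V →ₗ[ℝ] ℝ) : DualC V where
  toFun := dualExtAux α
  map_add' := map_add _
  map_smul' z x := by simpa using dualExtAux_smulC α z x

private lemma dualExtFun_tmul (α : V →ₗ[ℝ] ℝ) (z : ℂ) (v : V) :
    dualExtFun α (z ⊗ₜ[ℝ] v) = z * (α v : ℂ) := by
  simp [dualExtFun, dualExtAux]

/-- The ℂ-linear extension map `V^* → (V_ℂ)^*`, as an ℝ-linear map. -/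
def dualExt : (V →ₗ[ℝ] ℝ) →ₗ[ℝ] DualC V where
  toFun := dualExtFun
  map_add' α β := by
    apply LinearMap.ext; intro x
    induction x using TensorProduct.induction_on with
    | zero => simp
    | tmul w v =>
        simp only [dualExtFun_tmul, LinearMap.add_apply]
        push_cast
        ring
    | add x y hx hy =>
        simp only [map_add, LinearMap.add_apply] at *
        rw [hx, hy]
  map_smul' r α := by
    apply LinearMap.ext; intro x
    induction x using TensorProduct.induction_on with
    | zero => simp
    | tmul w v =>
        simp only [dualExtFun_tmul, RingHom.id_apply, LinearMap.smul_apply,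
          LinearMap.smul_apply, smul_eq_mul, Complex.real_smul]
        push_cast
        ring
    | add x y hx hy =>
        simp only [map_add, RingHom.id_apply, LinearMap.smul_apply, smul_eq_mul] at *
        rw [hx, hy]

/-- The canonical inclusion `𝕋V → 𝕋_ℂV`. -/
def iT : TR V →ₗ[ℝ] TCx V where
  toFun a := (iV a.1, dualExt a.2)
  map_add' a b := by simp [Prod.ext_iff]
  map_smul' r a := by simp [Prod.ext_iff]



/-- Auxiliary ℝ-linear version of the ℂ-bilinear extension of a real bilinear form. -/
def bilinExtAux (B : V →ₗ[ℝ] V →ₗ[ℝ] ℝ) : Cx V →ₗ[ℝ] DualC V :=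
  TensorProduct.lift
    (LinearMap.mk₂ ℝ (fun z v => z • dualExt (B v))
      (fun z w v => by simp only [add_smul])
      (fun r z v => by simp only [smul_assoc])
      (fun z v w => by simp only [map_add, smul_add])
      (fun r z v => by simp only [map_smul]; exact smul_comm z r _))

private lemma bilinExtAux_smulC (B : V →ₗ[ℝ] V →ₗ[ℝ] ℝ) (z : ℂ) (x : Cx V) :
    bilinExtAux B (z • x) = z • bilinExtAux B x := by
  induction x using TensorProduct.induction_on with
  | zero => simp
  | tmul w v =>
      simp only [bilinExtAux, smul_tmul', lift.tmul, LinearMap.mk₂_apply, smul_eq_mul,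
        mul_smul]
  | add x y hx hy => simp only [smul_add, map_add, hx, hy]

/-- The ℂ-bilinear extension of a real bilinear form `B : V × V → ℝ` to `V_ℂ`. -/
def bilinExt (B : V →ₗ[ℝ] V →ₗ[ℝ] ℝ) : Cx V →ₗ[ℂ] DualC V where
  toFun := bilinExtAux B
  map_add' := map_add _
  map_smul' z x := by simpa using bilinExtAux_smulC B z x

/-- The `B`-transformation `e^B(X+ξ) = X + ξ + B̃(X,·)` of `𝕋_ℂV`, for a real `B`. -/
def eB (B : V →ₗ[ℝ] V →ₗ[ℝ] ℝ) : TCx V →ₗ[ℂ] TCx V where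
  toFun a := (a.1, a.2 + bilinExt B a.1)
  map_add' a b := by
    simp only [Prod.fst_add, Prod.snd_add, map_add, Prod.mk_add_mk, Prod.mk.injEq]
    exact ⟨trivial, by abel⟩
  map_smul' z a := by
    simp only [Prod.smul_fst, Prod.smul_snd, map_smul, RingHom.id_apply, Prod.smul_mk,
      Prod.mk.injEq, smul_add]

/-- The real `B`-transformation `e^B(X+α) = X + α + B(X,·)` of `𝕋V`. -/
def eBR (B : V →ₗ[ℝ] V →ₗ[ℝ] ℝ) : TR V →ₗ[ℝ] TR V where
  toFun a := (a.1, a.2 + B a.1)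
  map_add' a b := by
    simp only [Prod.fst_add, Prod.snd_add, map_add, Prod.mk_add_mk, Prod.mk.injEq]
    exact ⟨trivial, by abel⟩
  map_smul' r a := by
    simp only [Prod.smul_fst, Prod.smul_snd, map_smul, RingHom.id_apply, Prod.smul_mk,
      Prod.mk.injEq, smul_add]


/-- The range `E = pr_{V_ℂ}(L)` of a subspace of `𝕋_ℂV`. -/
def Esub (L : Submodule ℂ (TCx V)) : Submodule ℂ (Cx V) :=
  L.map (LinearMap.fst ℂ (Cx V) (DualC V))

/-- The real index `r = dim_ℂ (L ∩ L̄)`. -/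
def riL (L : Submodule ℂ (TCx V)) : ℕ := finrank ℂ ↥(L ⊓ conjSub L)

/-- The real part `K = (L ∩ L̄) ∩ 𝕋V`, as a subspace of `𝕋V`. -/
def Ksub (L : Submodule ℂ (TCx V)) : Submodule ℝ (TR V) :=
  ((L ⊓ conjSub L).restrictScalars ℝ).comap iT

/-- The distribution `D = (E + Ē) ∩ V`, as a subspace of `V`. -/
def Dsub (L : Submodule ℂ (TCx V)) : Submodule ℝ V :=
  ((Esub L ⊔ conjE (Esub L)).restrictScalars ℝ).comap iV

/-- The distribution `Δ = (E ∩ Ē) ∩ V`, as a subspace of `V`. -/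
def DeltaSub (L : Submodule ℂ (TCx V)) : Submodule ℝ V :=
  ((Esub L ⊓ conjE (Esub L)).restrictScalars ℝ).comap iV

/-- The order `s = dim V - dim D`. -/
def orderL (L : Submodule ℂ (TCx V)) : ℕ := finrank ℝ V - finrank ℝ ↥(Dsub L)

/-- The (normalized) type `k = dim_ℂ(E + Ē) - dim_ℂ E`. -/
def typeL (L : Submodule ℂ (TCx V)) : ℕ :=
  finrank ℂ ↥(Esub L ⊔ conjE (Esub L)) - finrank ℂ ↥(Esub L)


-- ===== auxiliary lemmas added for the proof of stmt16 =====

lemma iV_apply' (v : V) : iV v = (1 : ℂ) ⊗ₜ[ℝ] v := rfl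

lemma conjCx_tmul (z : ℂ) (v : V) :
    conjCx (z ⊗ₜ[ℝ] v) = (starRingEnd ℂ z) ⊗ₜ[ℝ] v := by
  simp [conjCx, Complex.conjAe_coe]

lemma smul_real_cx (r : ℝ) (x : Cx V) : (r : ℂ) • x = r • x := by
  rw [← Complex.coe_algebraMap, algebraMap_smul]

/-- The real part of an element of `V_ℂ`. -/
def reC : Cx V →ₗ[ℝ] V :=
  (TensorProduct.lid ℝ V).toLinearMap ∘ₗ TensorProduct.map Complex.reLm LinearMap.id

/-- The imaginary part of an element of `V_ℂ`. -/
def imC : Cx V →ₗ[ℝ] V :=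
  (TensorProduct.lid ℝ V).toLinearMap ∘ₗ TensorProduct.map Complex.imLm LinearMap.id

lemma reC_tmul (z : ℂ) (v : V) : reC (z ⊗ₜ[ℝ] v) = z.re • v := by
  simp [reC]

lemma imC_tmul (z : ℂ) (v : V) : imC (z ⊗ₜ[ℝ] v) = z.im • v := by
  simp [imC]

lemma cx_decomp (x : Cx V) : iV (reC x) + Complex.I • iV (imC x) = x := by
  induction x using TensorProduct.induction_on with
  | zero => simp
  | tmul z v =>
      rw [reC_tmul, imC_tmul, iV_apply', iV_apply', tmul_smul, tmul_smul,
        ← smul_real_cx, ← smul_real_cx, smul_smul, ← add_smul]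
      rw [show (z.re : ℂ) + Complex.I * (z.im : ℂ) = z by
        rw [mul_comm]; exact Complex.re_add_im z]
      rw [smul_tmul', smul_eq_mul, mul_one]
  | add x y hx hy =>
      simp only [map_add, smul_add]
      conv_rhs => rw [← hx, ← hy]
      abel

lemma cx_conj_decomp (x : Cx V) : iV (reC x) - Complex.I • iV (imC x) = conjCx x := by
  induction x using TensorProduct.induction_on with
  | zero => simp [conjCx]
  | tmul z v =>
      rw [reC_tmul, imC_tmul, iV_apply', iV_apply', tmul_smul, tmul_smul,
        ← smul_real_cx, ← smul_real_cx, smul_smul, ← sub_smul, conjCx_tmul]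
      rw [show (z.re : ℂ) - Complex.I * (z.im : ℂ) = starRingEnd ℂ z by
        simp [Complex.ext_iff]]
      rw [smul_tmul', smul_eq_mul, mul_one]
  | add x y hx hy =>
      simp only [map_add, smul_add]
      conv_rhs => rw [← hx, ← hy]
      abel

lemma baseChange_subtype_tmul (Δ : Submodule ℝ V) (z : ℂ) (x : ↥Δ) :
    LinearMap.baseChange ℂ Δ.subtype (z ⊗ₜ[ℝ] x) = z ⊗ₜ[ℝ] (x : V) := by
  simp

lemma bilinExt_tmul_tmul (B : V →ₗ[ℝ] V →ₗ[ℝ] ℝ) (z w : ℂ) (v u : V) :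
    bilinExt B (z ⊗ₜ[ℝ] v) (w ⊗ₜ[ℝ] u) = z * w * (B v u : ℂ) := by
  show bilinExtAux B (z ⊗ₜ[ℝ] v) (w ⊗ₜ[ℝ] u) = z * w * (B v u : ℂ)
  rw [bilinExtAux, TensorProduct.lift.tmul]
  simp only [LinearMap.mk₂_apply, LinearMap.smul_apply]
  rw [show dualExt (B v) = dualExtFun (B v) from rfl, dualExtFun_tmul]
  simp [smul_eq_mul]; ring

/-- The real part of a ℂ-bilinear form on `W_ℂ`, restricted to `W`. -/
def realPartForm {W : Type*} [AddCommGroup W] [Module ℝ W]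
    (c : Cx W →ₗ[ℂ] Cx W →ₗ[ℂ] ℂ) : W →ₗ[ℝ] W →ₗ[ℝ] ℝ :=
  LinearMap.mk₂ ℝ (fun v w => (c (iV v) (iV w)).re)
    (fun v v' w => by simp [map_add])
    (fun r v w => by
      rw [map_smul, LinearMap.map_smul_of_tower, LinearMap.smul_apply]
      simp [Complex.real_smul, Complex.mul_re])
    (fun v w w' => by simp [map_add])
    (fun r v w => by
      rw [map_smul, LinearMap.map_smul_of_tower]
      simp [Complex.real_smul, Complex.mul_re])

lemma realPartForm_apply {W : Type*} [AddCommGroup W] [Module ℝ W]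
    (c : Cx W →ₗ[ℂ] Cx W →ₗ[ℂ] ℂ) (v w : W) :
    realPartForm c v w = (c (iV v) (iV w)).re := rfl

end CDirac

open CDirac Module

set_option maxHeartbeats 4000000 in
/-- A lagrangian `L ⊆ 𝕋_ℂV` of type `0` (i.e. `E = Ē`) satisfies
`E = Δ_ℂ`, and for every real alternating extension `B` of `Re ε|_{Δ×Δ}` (which exists)
one has `L = e^B(L(Δ_ℂ, i·ω̃))`, where `ω = Im ε|_{Δ×Δ}`. -/
theorem stmt16 (V : Type*) [AddCommGroup V] [Module ℝ V] [FiniteDimensional ℝ V]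
    (L : Submodule ℂ (TCx V)) (hL : IsLagrangianC L)
    (E : Submodule ℂ (Cx V)) (hE : E = Esub L)
    (htype0 : conjE E = E)
    (ε : ↥E →ₗ[ℂ] ↥E →ₗ[ℂ] ℂ) (halt : ∀ x : ↥E, ε x x = 0)
    (hchar : ∀ a : TCx V, a ∈ L ↔ ∃ h : a.1 ∈ E, ∀ y : ↥E, a.2 ↑y = ε ⟨a.1, h⟩ y)
    (Δ : Submodule ℝ V) (hΔ : Δ = (E.restrictScalars ℝ).comap iV)
    (ω : ↥Δ →ₗ[ℝ] ↥Δ →ₗ[ℝ] ℝ)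
    (hω : ∀ (x y : ↥Δ) (hx : iV (x : V) ∈ E) (hy : iV (y : V) ∈ E),
      ω x y = (ε ⟨iV (x : V), hx⟩ ⟨iV (y : V), hy⟩).im) :
    -- `E = Δ_ℂ`
    E = Submodule.span ℂ (iV '' (Δ : Set V)) ∧
    -- an alternating extension `B` of `B₀ = Re ε|_{Δ×Δ}` exists ...
    (∃ B : V →ₗ[ℝ] V →ₗ[ℝ] ℝ, (∀ v : V, B v v = 0) ∧
      ∀ (x y : ↥Δ) (hx : iV (x : V) ∈ E) (hy : iV (y : V) ∈ E),
        B (x : V) (y : V) = (ε ⟨iV (x : V), hx⟩ ⟨iV (y : V), hy⟩).re) ∧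
    -- ... and for every such `B`, `L = e^B (L(Δ_ℂ, i·ω̃))`
    ∀ B : V →ₗ[ℝ] V →ₗ[ℝ] ℝ, (∀ v : V, B v v = 0) →
      (∀ (x y : ↥Δ) (hx : iV (x : V) ∈ E) (hy : iV (y : V) ∈ E),
        B (x : V) (y : V) = (ε ⟨iV (x : V), hx⟩ ⟨iV (y : V), hy⟩).re) →
      (L : Set (TCx V)) = (eB B) ''
        {a : TCx V | ∃ X' : Cx ↥Δ, (LinearMap.baseChange ℂ Δ.subtype) X' = a.1 ∧
          ∀ Y' : Cx ↥Δ, a.2 ((LinearMap.baseChange ℂ Δ.subtype) Y') =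
            Complex.I * bilinExt ω X' Y'} := by
  classical
  -- basic membership facts
  have hΔmem : ∀ x : ↥Δ, iV (x : V) ∈ E := by
    rintro ⟨v, hv⟩
    rw [hΔ] at hv
    exact hv
  have hconj : ∀ x ∈ E, conjCx x ∈ E := by
    intro x hx
    rw [← htype0]
    exact ⟨x, hx, rfl⟩
  have hre : ∀ x ∈ E, iV (reC x) ∈ E := by
    intro x hx
    have h1 := cx_decomp x
    have h2 := cx_conj_decomp x
    have hsum : (2 : ℂ) • iV (reC x) = x + conjCx x := by
      calc (2 : ℂ) • iV (reC x)
          = (iV (reC x) + Complex.I • iV (imC x)) +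
            (iV (reC x) - Complex.I • iV (imC x)) := by
            rw [two_smul]; abel
        _ = x + conjCx x := by rw [h1, h2]
    have hmem : (2 : ℂ) • iV (reC x) ∈ E := hsum ▸ E.add_mem hx (hconj x hx)
    have := E.smul_mem ((2 : ℂ)⁻¹) hmem
    rwa [smul_smul, inv_mul_cancel₀ (by norm_num), one_smul] at this
  have him : ∀ x ∈ E, iV (imC x) ∈ E := by
    intro x hx
    have h1 := cx_decomp x
    have h2 := cx_conj_decomp x
    have hsum : ((2 : ℂ) * Complex.I) • iV (imC x) = x - conjCx x := by
      calc ((2 : ℂ) * Complex.I) • iV (imC x)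
          = (iV (reC x) + Complex.I • iV (imC x)) -
            (iV (reC x) - Complex.I • iV (imC x)) := by
            rw [mul_smul, two_smul]; abel
        _ = x - conjCx x := by rw [h1, h2]
    have hmem : ((2 : ℂ) * Complex.I) • iV (imC x) ∈ E := hsum ▸ E.sub_mem hx (hconj x hx)
    have := E.smul_mem (((2 : ℂ) * Complex.I)⁻¹) hmem
    rwa [smul_smul, inv_mul_cancel₀ (by simp [Complex.ext_iff]), one_smul] at this
  have hΔof : ∀ v : V, iV v ∈ E → v ∈ Δ := by
    intro v hv
    rw [hΔ]
    exact hv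
  -- Part 1 : E = span ℂ (iV '' Δ)
  have h1 : E = Submodule.span ℂ (iV '' (Δ : Set V)) := by
    apply le_antisymm
    · intro x hx
      have hxeq := cx_decomp x
      have hrmem : iV (reC x) ∈ Submodule.span ℂ (iV '' (Δ : Set V)) :=
        Submodule.subset_span ⟨reC x, hΔof _ (hre x hx), rfl⟩
      have hmmem : iV (imC x) ∈ Submodule.span ℂ (iV '' (Δ : Set V)) :=
        Submodule.subset_span ⟨imC x, hΔof _ (him x hx), rfl⟩
      rw [← hxeq]
      exact Submodule.add_mem _ hrmem (Submodule.smul_mem _ _ hmmem)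
    · rw [Submodule.span_le]
      rintro _ ⟨v, hv, rfl⟩
      exact hΔmem ⟨v, hv⟩
  -- the complexified inclusion `j : Δ_ℂ → V_ℂ` and its corestriction to `E`
  set j : Cx ↥Δ →ₗ[ℂ] Cx V := LinearMap.baseChange ℂ Δ.subtype with hj
  have hjmem : ∀ X' : Cx ↥Δ, j X' ∈ E := by
    intro X'
    induction X' using TensorProduct.induction_on with
    | zero => simp
    | tmul z x =>
        rw [hj, baseChange_subtype_tmul]
        have : (z ⊗ₜ[ℝ] (x : V) : Cx V) = z • iV (x : V) := by
          rw [iV_apply', smul_tmul', smul_eq_mul, mul_one]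
        rw [this]
        exact E.smul_mem z (hΔmem x)
    | add a b ha hb => rw [map_add]; exact E.add_mem ha hb
  have hjsurj : ∀ u ∈ E, ∃ X', j X' = u := by
    intro u hu
    rw [h1] at hu
    have hle : Submodule.span ℂ (iV '' (Δ : Set V)) ≤ LinearMap.range j := by
      rw [Submodule.span_le]
      rintro _ ⟨v, hv, rfl⟩
      exact ⟨(1 : ℂ) ⊗ₜ[ℝ] (⟨v, hv⟩ : ↥Δ), by rw [hj, baseChange_subtype_tmul]; rfl⟩
    exact hle hu
  set jE : Cx ↥Δ →ₗ[ℂ] ↥E := LinearMap.codRestrict E j hjmem with hjEdef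
  have hjE : ∀ (z : ℂ) (x : ↥Δ),
      jE (z ⊗ₜ[ℝ] x) = z • (⟨iV (x : V), hΔmem x⟩ : ↥E) := by
    intro z x
    apply Subtype.ext
    rw [hjEdef, LinearMap.codRestrict_apply, Submodule.coe_smul]
    rw [show ((⟨iV (x : V), hΔmem x⟩ : ↥E) : Cx V) = (1 : ℂ) ⊗ₜ[ℝ] (x : V) from rfl]
    rw [hj, baseChange_subtype_tmul, smul_tmul', smul_eq_mul, mul_one]
  -- the key identity, for any admissible B
  have key : ∀ (B : V →ₗ[ℝ] V →ₗ[ℝ] ℝ),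
      (∀ (x y : ↥Δ) (hx : iV (x : V) ∈ E) (hy : iV (y : V) ∈ E),
        B (x : V) (y : V) = (ε ⟨iV (x : V), hx⟩ ⟨iV (y : V), hy⟩).re) →
      ∀ X' Y' : Cx ↥Δ,
        ε (jE X') (jE Y') = bilinExt B (j X') (j Y') + Complex.I * bilinExt ω X' Y' := by
    intro B hB X'
    induction X' using TensorProduct.induction_on with
    | zero => intro Y'; simp
    | tmul z x =>
        intro Y'
        induction Y' using TensorProduct.induction_on with
        | zero => simp
        | tmul w y =>
            rw [hjE z x, hjE w y, hj, baseChange_subtype_tmul, baseChange_subtype_tmul,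
              bilinExt_tmul_tmul, bilinExt_tmul_tmul]
            simp only [map_smul, LinearMap.smul_apply, smul_eq_mul]
            rw [hB x y (hΔmem x) (hΔmem y), hω x y (hΔmem x) (hΔmem y)]
            linear_combination (-(z * w)) *
              Complex.re_add_im (ε ⟨iV (x : V), hΔmem x⟩ ⟨iV (y : V), hΔmem y⟩)
        | add a b ha hb =>
            simp only [map_add, LinearMap.map_add] at ha hb ⊢
            rw [ha, hb]; ring
    | add a b ha hb =>
        intro Y'
        simp only [map_add, LinearMap.add_apply]
        rw [ha Y', hb Y']; ring
  -- Part 2 : existence of an alternating extension B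
  obtain ⟨q, hq⟩ := Submodule.exists_isCompl Δ
  set π : V →ₗ[ℝ] ↥Δ := Δ.linearProjOfIsCompl q hq with hπ
  have hπx : ∀ x : ↥Δ, π (x : V) = x := by
    intro x
    rw [hπ]
    exact Submodule.linearProjOfIsCompl_apply_left hq x
  set εjj : Cx ↥Δ →ₗ[ℂ] Cx ↥Δ →ₗ[ℂ] ℂ := ε.compl₁₂ jE jE with hεjjdef
  set B₂ : V →ₗ[ℝ] V →ₗ[ℝ] ℝ := (realPartForm εjj).compl₁₂ π π with hB₂
  have hjiV : ∀ x : ↥Δ, jE (iV x) = (⟨iV (x : V), hΔmem x⟩ : ↥E) := by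
    intro x
    rw [iV_apply' x, hjE, one_smul]
  have hB₂apply : ∀ v w : V,
      B₂ v w = (ε (jE (iV (π v))) (jE (iV (π w)))).re := fun v w => rfl
  have hB₂alt : ∀ v : V, B₂ v v = 0 := by
    intro v
    rw [hB₂apply, halt, Complex.zero_re]
  have hB₂res : ∀ (x y : ↥Δ) (hx : iV (x : V) ∈ E) (hy : iV (y : V) ∈ E),
      B₂ (x : V) (y : V) = (ε ⟨iV (x : V), hx⟩ ⟨iV (y : V), hy⟩).re := by
    intro x y hx hy
    rw [hB₂apply, hπx x, hπx y, hjiV x, hjiV y]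
  refine ⟨h1, ⟨B₂, hB₂alt, hB₂res⟩, ?_⟩
  -- Part 3
  intro B hBalt hB
  have eB_apply : ∀ p : TCx V, eB B p = (p.1, p.2 + bilinExt B p.1) := fun p => rfl
  ext a
  simp only [SetLike.mem_coe, Set.mem_image, Set.mem_setOf_eq]
  constructor
  · intro ha
    obtain ⟨h, hval⟩ := (hchar a).mp ha
    obtain ⟨X', hX'⟩ := hjsurj a.1 h
    refine ⟨(a.1, a.2 - bilinExt B a.1), ⟨X', hX', ?_⟩, ?_⟩
    · intro Y'
      have h2 : a.2 (j Y') = ε ⟨a.1, h⟩ (jE Y') := by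
        have h3 := hval (jE Y')
        rwa [hjEdef, LinearMap.codRestrict_apply] at h3
      have h3 : (⟨a.1, h⟩ : ↥E) = jE X' := by
        apply Subtype.ext
        rw [hjEdef, LinearMap.codRestrict_apply, hX']
      show (a.2 - bilinExt B a.1) (j Y') = Complex.I * bilinExt ω X' Y'
      rw [LinearMap.sub_apply, h2, h3, key B hB X' Y', hX']
      ring
    · rw [eB_apply]
      refine Prod.ext_iff.mpr ⟨rfl, ?_⟩
      show a.2 - bilinExt B a.1 + bilinExt B a.1 = a.2
      simp
  · rintro ⟨b, ⟨X', hX'1, hX'2⟩, rfl⟩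
    rw [hchar]
    have hb1 : (eB B b).1 ∈ E := by
      rw [eB_apply]
      exact hX'1 ▸ hjmem X'
    refine ⟨hb1, ?_⟩
    intro y
    obtain ⟨Y', hY'⟩ := hjsurj (y : Cx V) y.2
    have hy : y = jE Y' := by
      apply Subtype.ext
      rw [hjEdef, LinearMap.codRestrict_apply, hY']
    have hb2 : (⟨(eB B b).1, hb1⟩ : ↥E) = jE X' := by
      apply Subtype.ext
      show (eB B b).1 = ((jE X' : ↥E) : Cx V)
      rw [hjEdef, LinearMap.codRestrict_apply, eB_apply]
      exact hX'1.symm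
    rw [hy, hb2]
    have hcoe : ((jE Y' : ↥E) : Cx V) = j Y' := by
      rw [hjEdef, LinearMap.codRestrict_apply]
    rw [hcoe, eB_apply]
    show (b.2 + bilinExt B b.1) (j Y') = ε (jE X') (jE Y')
    rw [LinearMap.add_apply, hX'2 Y', key B hB X' Y', ← hX'1]
    ring
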